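/- In a dynamic ordinal game in reduced form satisfying the replacement property: (i) for every k ∈ ℕ, the set 𝕌^k(S) produced by Iterative Conditional B-Dominance is nonempty, hence 𝕌^∞(S) ≠ ∅; (ii) there exists K ∈ ℕ such that 𝕌^K(S) = 𝕌^{K+1}(S) = 𝕌^∞(S) ≠ ∅. -/
import Mathlib


open scoped Classical

namespace ICBD

section OrdinalGames

variable {I : Type} [Fintype I] [DecidableEq I] [Nonempty I]
variable {S : I → Type} [∀ i, Fintype (S i)] [∀ i, DecidableEq (S i)] [∀ i, Nonempty (S i)]
variable {Z : Type} [Fintype Z]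

/-- Profiles of opponents' strategies for player `i`. -/
def Opp (S : I → Type) (i : I) : Type := ∀ j : {j : I // j ≠ i}, S j.1

instance (i : I) : Fintype (Opp S i) :=
  inferInstanceAs (Fintype (∀ j : {j : I // j ≠ i}, S j.1))

instance (i : I) : Nonempty (Opp S i) :=
  ⟨fun _ => Classical.ofNonempty⟩

variable (ζ : (∀ j, S j) → Z) (pref : I → Z → Z → Prop)

/-- The joint strategy profile where `i` plays `si` and the opponents play `t`. -/
def joint (i : I) (si : S i) (t : Opp S i) : ∀ j, S j := fun j =>
  if h : j = i then cast (congrArg S h.symm) si else t ⟨j, h⟩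

/-- Outcome when `i` plays `si` and the opponents play `t`. -/
def out (i : I) (si : S i) (t : Opp S i) : Z := ζ (joint i si t)

/-- Asymmetric part `≻ᵢ` of the preference relation `≿ᵢ`. -/
def SPref (i : I) (x y : Z) : Prop := pref i x y ∧ ¬ pref i y x

/-- `s'` strictly dominates `s` for player `i` against the opponents' profiles in `Q`. -/
def StrictDom (i : I) (Q : Set (Opp S i)) (s' s : S i) : Prop :=
  ∀ t ∈ Q, SPref pref i (out ζ i s' t) (out ζ i s t)

/-- `s'` weakly dominates `s` for player `i` against the opponents' profiles in `Q`. -/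
def WeakDom (i : I) (Q : Set (Opp S i)) (s' s : S i) : Prop :=
  (∀ t ∈ Q, pref i (out ζ i s' t) (out ζ i s t)) ∧
    ∃ t ∈ Q, SPref pref i (out ζ i s' t) (out ζ i s t)

/-- `s` is admissible with respect to the restriction `Ri × Q`. -/
def Admissible (i : I) (Ri : Set (S i)) (Q : Set (Opp S i)) (s : S i) : Prop :=
  s ∈ Ri ∧ ∀ s' ∈ Ri, ¬ WeakDom ζ pref i Q s' s

/-- `s` is Börgers-dominated with respect to the restriction `Ri × Q`. -/
def BDom (i : I) (Ri : Set (S i)) (Q : Set (Opp S i)) (s : S i) : Prop :=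
  ∀ Q' : Set (Opp S i), Q' ⊆ Q → Q'.Nonempty → ¬ Admissible ζ pref i Ri Q' s

/-- Opponents' profiles compatible with the restriction `R`. -/
def OppSet (R : ∀ j, Set (S j)) (i : I) : Set (Opp S i) :=
  {t | ∀ j : {j : I // j ≠ i}, t j ∈ R j.1}

/-- A restriction: componentwise nonempty product. -/
def IsRestriction (R : ∀ j, Set (S j)) : Prop := ∀ j, (R j).Nonempty

variable {H : I → Type} [∀ i, Fintype (H i)] [∀ i, Nonempty (H i)]
variable (Sh : ∀ i, H i → Set (S i)) (Th : ∀ i, H i → Set (Opp S i))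

/-- The replacement property of a dynamic ordinal game in reduced form. -/
def Replacement : Prop :=
  ∀ R : ∀ j, Set (S j), IsRestriction R →
    ∀ (i : I) (h : H i), (R i ∩ Sh i h).Nonempty →
      ∀ s ∈ R i ∩ Sh i h, ∀ s' ∈ R i ∩ Sh i h,
        ∃ s'' ∈ R i ∩ Sh i h,
          (∀ t ∈ OppSet R i ∩ Th i h, out ζ i s'' t = out ζ i s' t) ∧
          ∀ t ∈ OppSet R i \ (OppSet R i ∩ Th i h), out ζ i s'' t = out ζ i s t

/-- `s` is conditionally B-dominated with respect to `R`. -/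
def CondBDom (R : ∀ j, Set (S j)) (i : I) (s : S i) : Prop :=
  ∃ h : H i, s ∈ Sh i h ∧ (R i ∩ Sh i h).Nonempty ∧ (OppSet R i ∩ Th i h).Nonempty ∧
    BDom ζ pref i (R i ∩ Sh i h) (OppSet R i ∩ Th i h) s

/-- Total mass of the weights `p` on the event `E`. -/
noncomputable def measOf {i : I} (p : Opp S i → ℝ) (E : Set (Opp S i)) : ℝ :=
  ∑ t : Opp S i, if t ∈ E then p t else 0

/-- Conditional probability system for player `i`. -/
def IsCPS (i : I) (μ : H i → Opp S i → ℝ) : Prop :=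
  (∀ (h : H i) (t : Opp S i), 0 ≤ μ h t) ∧
  (∀ h : H i, ∑ t : Opp S i, μ h t = 1) ∧
  (∀ h : H i, measOf (μ h) (Th i h) = 1) ∧
  (∀ h h' : H i, Th i h = Th i h' → μ h = μ h') ∧
  ∀ (E : Set (Opp S i)) (h h' : H i), E ⊆ Th i h' → Th i h' ⊆ Th i h →
    measOf (μ h) E = measOf (μ h') E * measOf (μ h) (Th i h')

/-- Outcomes reachable within the restriction `R`. -/
def ZSet (R : ∀ j, Set (S j)) : Set Z := {z | ∃ s : ∀ j, S j, (∀ j, s j ∈ R j) ∧ ζ s = z}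

/-- `u` originates from `≿ᵢ` on the set `D` of outcomes. -/
def OriginatesOn (i : I) (D : Set Z) (u : Z → ℝ) : Prop :=
  ∀ z ∈ D, ∀ z' ∈ D, (u z' ≤ u z ↔ pref i z z')

/-- Bernoulli utility function for player `i`. -/
def Bernoulli (i : I) (u : Z → ℝ) : Prop := ∀ z z' : Z, u z' ≤ u z ↔ pref i z z'

/-- Expected utility of `s` over the opponents' profiles in `Rm` with weights `p`. -/
noncomputable def exValue (i : I) (Rm : Set (Opp S i)) (u : Z → ℝ) (p : Opp S i → ℝ)
    (s : S i) : ℝ :=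
  ∑ t : Opp S i, if t ∈ Rm then u (out ζ i s t) * p t else 0

/-- `sStar` is sequentially rational given `R` and the Bernoulli utility function `u`. -/
def SeqRationalU (R : ∀ j, Set (S j)) (i : I) (u : Z → ℝ) (sStar : S i) : Prop :=
  ∃ μ : H i → Opp S i → ℝ, IsCPS Th i μ ∧
    (∀ h : H i, (R i ∩ Sh i h).Nonempty → (OppSet R i ∩ Th i h).Nonempty →
      measOf (μ h) (OppSet R i ∩ Th i h) = 1) ∧
    ∀ h : H i, sStar ∈ Sh i h → (R i ∩ Sh i h).Nonempty → (OppSet R i ∩ Th i h).Nonempty →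
      ∀ s ∈ R i ∩ Sh i h,
        exValue ζ i (OppSet R i) u (μ h) s ≤ exValue ζ i (OppSet R i) u (μ h) sStar

/-- `sStar` is sequentially rational given `R`. -/
def SeqRational (R : ∀ j, Set (S j)) (i : I) (sStar : S i) : Prop :=
  ∃ u : Z → ℝ, OriginatesOn pref i (ZSet ζ R) u ∧ SeqRationalU ζ Sh Th R i u sStar

/-- `sStar` is cautiously sequentially rational given `R`. -/
def CautSeqRational (R : ∀ j, Set (S j)) (i : I) (sStar : S i) : Prop :=
  ∃ u : Z → ℝ, OriginatesOn pref i (ZSet ζ R) u ∧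
    ∃ μ : H i → Opp S i → ℝ, IsCPS Th i μ ∧
      (∀ h : H i, sStar ∈ Sh i h → (R i ∩ Sh i h).Nonempty →
        (OppSet R i ∩ Th i h).Nonempty → {t | 0 < μ h t} = OppSet R i ∩ Th i h) ∧
      ∀ h : H i, sStar ∈ Sh i h → (R i ∩ Sh i h).Nonempty →
          (OppSet R i ∩ Th i h).Nonempty →
        ∀ s ∈ R i ∩ Sh i h,
          exValue ζ i (OppSet R i) u (μ h) s ≤ exValue ζ i (OppSet R i) u (μ h) sStar

/-- The `𝕌` operator (strategies not conditionally B-dominated). -/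
def Uop (R : ∀ j, Set (S j)) : ∀ j, Set (S j) := fun j =>
  {s ∈ R j | ¬ CondBDom ζ pref Sh Th R j s}

/-- The `𝕊` operator (sequentially rational strategies). -/
def Sop (R : ∀ j, Set (S j)) : ∀ j, Set (S j) := fun j =>
  {s ∈ R j | SeqRational ζ pref Sh Th R j s}

/-- Iterative Conditional B-Dominance started from `R`. -/
def UiterFrom (R : ∀ j, Set (S j)) : ℕ → ∀ j, Set (S j)
  | 0 => R
  | n + 1 => Uop ζ pref Sh Th (UiterFrom R n)

/-- Iterative Conditional B-Dominance started from the full strategy sets. -/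
def Uiter (k : ℕ) : ∀ j, Set (S j) :=
  UiterFrom ζ pref Sh Th (fun _ => Set.univ) k

/-- Ordinal Strong Rationalizability started from `R`. -/
def SiterFrom (R : ∀ j, Set (S j)) : ℕ → ∀ j, Set (S j)
  | 0 => R
  | n + 1 => Sop ζ pref Sh Th (SiterFrom R n)

/-- Ordinal Strong Rationalizability started from the full strategy sets. -/
def Siter (k : ℕ) : ∀ j, Set (S j) :=
  SiterFrom ζ pref Sh Th (fun _ => Set.univ) k

/-- `σ` is a mixed strategy with support in `Ri`. -/
def IsMixedOn (i : I) (Ri : Set (S i)) (σ : S i → ℝ) : Prop :=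
  (∀ s, 0 ≤ σ s) ∧ (∑ s : S i, σ s = 1) ∧ ∀ s, σ s ≠ 0 → s ∈ Ri

/-- `s` is strictly dominated by a mixed strategy, given the utility `u`. -/
def MixedStrictDom (i : I) (Ri : Set (S i)) (Q : Set (Opp S i)) (u : Z → ℝ)
    (s : S i) : Prop :=
  ∃ σ : S i → ℝ, IsMixedOn i Ri σ ∧
    ∀ t ∈ Q, u (out ζ i s t) < ∑ s' : S i, σ s' * u (out ζ i s' t)

/-- The `i`-th component of the `𝕄` operator, given the utility `u` for player `i`. -/
def Mopi (i : I) (u : Z → ℝ) (R : ∀ j, Set (S j)) : Set (S i) :=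
  {s ∈ R i | ∀ h : H i, s ∈ Sh i h → (R i ∩ Sh i h).Nonempty →
    (OppSet R i ∩ Th i h).Nonempty →
    ¬ MixedStrictDom ζ i (R i ∩ Sh i h) (OppSet R i ∩ Th i h) u s}

/-- The `𝕄` operator, given a profile `u` of utilities. -/
def Mop (u : I → Z → ℝ) (R : ∀ j, Set (S j)) : ∀ j, Set (S j) := fun j =>
  Mopi ζ Sh Th j (u j) R

/-- The strong-rationalizability operator `ℝ(·)[u]`, given a profile `u` of utilities. -/
def Rop (u : I → Z → ℝ) (R : ∀ j, Set (S j)) : ∀ j, Set (S j) := fun j =>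
  {s ∈ R j | SeqRationalU ζ Sh Th R j (u j) s}

/-- Strong Rationalizability started from `R`, given a profile `u` of utilities. -/
def RiterFrom (u : I → Z → ℝ) (R : ∀ j, Set (S j)) : ℕ → ∀ j, Set (S j)
  | 0 => R
  | n + 1 => Rop ζ Sh Th u (RiterFrom u R n)

/-- Strong Rationalizability started from the full strategy sets. -/
def Riter (u : I → Z → ℝ) (k : ℕ) : ∀ j, Set (S j) :=
  RiterFrom ζ Sh Th u (fun _ => Set.univ) k

/-- A complete transitive relation on a finite type has an integer-valued
utility representation. -/
lemma exists_int_util {Z : Type} [Fintype Z] (p : Z → Z → Prop)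
    (hcomp : ∀ x y, p x y ∨ p y x) (htrans : Transitive p) :
    ∃ u : Z → ℝ, (∀ z z', u z' ≤ u z ↔ p z z') ∧ (∀ z, 0 ≤ u z) ∧
      (∀ z, u z ≤ (Fintype.card Z : ℝ)) ∧ ∀ z z', u z' < u z → u z' + 1 ≤ u z := by
  classical
  refine ⟨fun z => ((Finset.univ.filter fun w => p z w).card : ℝ), ?_, ?_, ?_, ?_⟩
  · have imp1 : ∀ z z', p z z' →
        ((Finset.univ.filter fun w => p z' w).card : ℝ) ≤
          ((Finset.univ.filter fun w => p z w).card : ℝ) := by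
      intro z z' hzz'
      have hsub : (Finset.univ.filter fun w => p z' w) ⊆
          (Finset.univ.filter fun w => p z w) := by
        intro w hw
        simp only [Finset.mem_filter, Finset.mem_univ, true_and] at hw ⊢
        exact htrans hzz' hw
      exact_mod_cast Finset.card_le_card hsub
    have imp2 : ∀ z z', ¬ p z z' →
        ((Finset.univ.filter fun w => p z w).card : ℝ) <
          ((Finset.univ.filter fun w => p z' w).card : ℝ) := by
      intro z z' hn
      have hz'z : p z' z := (hcomp z z').resolve_left hn
      have hsub : (Finset.univ.filter fun w => p z w) ⊂
          (Finset.univ.filter fun w => p z' w) := by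
        refine Finset.ssubset_iff_of_subset ?_ |>.mpr ?_
        · intro w hw
          simp only [Finset.mem_filter, Finset.mem_univ, true_and] at hw ⊢
          exact htrans hz'z hw
        · refine ⟨z', ?_, ?_⟩ <;>
            simp only [Finset.mem_filter, Finset.mem_univ, true_and]
          · exact (hcomp z' z').elim id id
          · exact hn
      exact_mod_cast Finset.card_lt_card hsub
    intro z z'
    constructor
    · intro hle
      by_contra hn
      exact absurd hle (not_le.mpr (imp2 z z' hn))
    · exact imp1 z z'
  · intro z; positivity
  · intro z
    show ((Finset.univ.filter fun w => p z w).card : ℝ) ≤ (Fintype.card Z : ℝ)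
    exact_mod_cast (Finset.card_filter_le _ _).trans_eq Finset.card_univ
  · intro z z' hlt
    have hlt' : ((Finset.univ.filter fun w => p z' w).card : ℝ) <
        ((Finset.univ.filter fun w => p z w).card : ℝ) := hlt
    have : (Finset.univ.filter fun w => p z' w).card <
        (Finset.univ.filter fun w => p z w).card := by exact_mod_cast hlt'
    show ((Finset.univ.filter fun w => p z' w).card : ℝ) + 1 ≤
        ((Finset.univ.filter fun w => p z w).card : ℝ)
    exact_mod_cast Nat.succ_le_of_lt this

/-- Core lemma: the `𝕌` operator preserves (componentwise) nonemptiness. -/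
lemma Uop_nonempty
    (hcomp : ∀ (i : I) (x y : Z), pref i x y ∨ pref i y x)
    (htrans : ∀ i : I, Transitive (pref i))
    (hrep : Replacement ζ Sh Th)
    (R : ∀ j, Set (S j)) (hR : IsRestriction R) (i : I) :
    (Uop ζ pref Sh Th R i).Nonempty := by
  classical
  obtain ⟨u, hu, hu0, huB, huInt⟩ := exists_int_util (pref i) (hcomp i) (htrans i)
  set C : ℝ := (Fintype.card Z : ℝ) with hC
  have hC0 : 0 ≤ C := Nat.cast_nonneg _
  set B : ℝ := C + 2 with hBdef
  have hBpos : (0 : ℝ) < B := by positivity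
  set e := Fintype.equivFin (Opp S i) with he
  set w : Opp S i → ℝ := fun t => B ^ ((e t : ℕ)) with hw
  have hwpos : ∀ t, 0 < w t := fun t => pow_pos hBpos _
  set Φ : S i → ℝ := fun s =>
    ∑ t : Opp S i, if t ∈ OppSet R i then w t * u (out ζ i s t) else 0 with hΦ
  have hgeom : ∀ n : ℕ, C * ∑ j ∈ Finset.range n, B ^ j < B ^ n := by
    intro n
    induction n with
    | zero => simpa using (by norm_num : (0:ℝ) < 1)
    | succ n ih =>
      have hBn : (0:ℝ) < B ^ n := pow_pos hBpos n
      rw [Finset.sum_range_succ, pow_succ]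
      nlinarith [ih, hBn, hC0]
  -- one improvement step
  have step : ∀ s, s ∈ R i → CondBDom ζ pref Sh Th R i s →
      ∃ s', s' ∈ R i ∧ Φ s < Φ s' := by
    intro s hs hBdom
    obtain ⟨h, hsSh, hRn, hTn, hbd⟩ := hBdom
    have hTfin : (OppSet R i ∩ Th i h).Finite := Set.toFinite _
    have hTfne : hTfin.toFinset.Nonempty := by
      rwa [Set.Finite.toFinset_nonempty]
    obtain ⟨tstar, htm, htmax⟩ :=
      hTfin.toFinset.exists_max_image (fun t => ((e t : ℕ))) hTfne
    have htT : tstar ∈ OppSet R i ∩ Th i h := hTfin.mem_toFinset.mp htm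
    have hnotadm :=
      hbd {tstar} (Set.singleton_subset_iff.mpr htT) ⟨tstar, rfl⟩
    rw [Admissible] at hnotadm
    push_neg at hnotadm
    obtain ⟨x, hx, hwd⟩ := hnotadm ⟨hs, hsSh⟩
    obtain ⟨-, t', ht', hsp⟩ := hwd
    rw [Set.mem_singleton_iff] at ht'
    rw [ht'] at hsp
    have hgap : u (out ζ i s tstar) + 1 ≤ u (out ζ i x tstar) := by
      apply huInt
      have : ¬ u (out ζ i x tstar) ≤ u (out ζ i s tstar) := by
        intro hle
        exact hsp.2 ((hu _ _).mp hle)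
      linarith [not_le.mp this]
    obtain ⟨s'', hs''mem, hout1, hout2⟩ :=
      hrep R hR i h hRn s ⟨hs, hsSh⟩ x hx
    refine ⟨s'', hs''mem.1, ?_⟩
    rw [← sub_pos]
    have hdiff : Φ s'' - Φ s =
        ∑ t ∈ hTfin.toFinset, w t * (u (out ζ i x t) - u (out ζ i s t)) := by
      have h1 : Φ s'' - Φ s = ∑ t : Opp S i,
          ((if t ∈ OppSet R i then w t * u (out ζ i s'' t) else 0) -
            (if t ∈ OppSet R i then w t * u (out ζ i s t) else 0)) := by
        rw [hΦ, ← Finset.sum_sub_distrib]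
      rw [h1,
        ← Finset.sum_subset (Finset.subset_univ hTfin.toFinset) (by
          intro t _ htn
          by_cases hto : t ∈ OppSet R i
          · have hmem : t ∈ OppSet R i \ (OppSet R i ∩ Th i h) :=
              ⟨hto, fun hc => htn (hTfin.mem_toFinset.mpr hc)⟩
            rw [if_pos hto, if_pos hto, hout2 t hmem, sub_self]
          · rw [if_neg hto, if_neg hto, sub_self])]
      refine Finset.sum_congr rfl fun t ht => ?_
      have htT' : t ∈ OppSet R i ∩ Th i h := hTfin.mem_toFinset.mp ht
      rw [if_pos htT'.1, if_pos htT'.1, hout1 t htT']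
      ring
    rw [hdiff, ← Finset.add_sum_erase _ _ htm]
    have hterm1 : w tstar * 1 ≤
        w tstar * (u (out ζ i x tstar) - u (out ζ i s tstar)) :=
      mul_le_mul_of_nonneg_left (by linarith) (le_of_lt (hwpos tstar))
    have hterm2 : ∀ t ∈ hTfin.toFinset.erase tstar,
        -(w t * C) ≤ w t * (u (out ζ i x t) - u (out ζ i s t)) := by
      intro t _
      have h1 : 0 ≤ u (out ζ i x t) := hu0 _
      have h2 : u (out ζ i s t) ≤ C := huB _
      nlinarith [hwpos t]
    have hsum2 : ∑ t ∈ hTfin.toFinset.erase tstar, -(w t * C) ≤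
        ∑ t ∈ hTfin.toFinset.erase tstar,
          w t * (u (out ζ i x t) - u (out ζ i s t)) :=
      Finset.sum_le_sum hterm2
    have himg : ∑ t ∈ hTfin.toFinset.erase tstar, w t ≤
        ∑ j ∈ Finset.range ((e tstar : ℕ)), B ^ j := by
      have hinj : Set.InjOn (fun t => ((e t : ℕ)))
          ↑(hTfin.toFinset.erase tstar) := by
        intro a _ b _ hab
        exact e.injective (Fin.val_injective hab)
      calc ∑ t ∈ hTfin.toFinset.erase tstar, w t
          = ∑ j ∈ (hTfin.toFinset.erase tstar).image (fun t => ((e t : ℕ))),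
              B ^ j := by
            rw [Finset.sum_image (fun a ha b hb hab => hinj ha hb hab)]
        _ ≤ ∑ j ∈ Finset.range ((e tstar : ℕ)), B ^ j := by
            apply Finset.sum_le_sum_of_subset_of_nonneg
            · intro j hj
              obtain ⟨t, ht, rfl⟩ := Finset.mem_image.mp hj
              have hne : t ≠ tstar := Finset.ne_of_mem_erase ht
              have hle : ((e t : ℕ)) ≤ ((e tstar : ℕ)) :=
                htmax t (Finset.mem_of_mem_erase ht)
              have hne' : ((e t : ℕ)) ≠ ((e tstar : ℕ)) := fun hc =>
                hne (e.injective (Fin.val_injective hc))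
              exact Finset.mem_range.mpr (lt_of_le_of_ne hle hne')
            · intro j _ _
              positivity
    have hfin : C * ∑ j ∈ Finset.range ((e tstar : ℕ)), B ^ j <
        B ^ ((e tstar : ℕ)) := hgeom _
    have hwts : w tstar = B ^ ((e tstar : ℕ)) := rfl
    have hmulC : ∑ t ∈ hTfin.toFinset.erase tstar, -(w t * C) =
        -(C * ∑ t ∈ hTfin.toFinset.erase tstar, w t) := by
      rw [Finset.sum_neg_distrib, Finset.mul_sum]
      congr 1
      exact Finset.sum_congr rfl fun t _ => by ring
    have hCsum : C * ∑ t ∈ hTfin.toFinset.erase tstar, w t ≤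
        C * ∑ j ∈ Finset.range ((e tstar : ℕ)), B ^ j :=
      mul_le_mul_of_nonneg_left himg hC0
    calc (0:ℝ) < B ^ ((e tstar : ℕ)) -
          C * ∑ j ∈ Finset.range ((e tstar : ℕ)), B ^ j := by linarith
      _ ≤ w tstar * 1 + ∑ t ∈ hTfin.toFinset.erase tstar, -(w t * C) := by
          rw [hwts, hmulC, mul_one]
          linarith
      _ ≤ _ := by
          exact add_le_add hterm1 hsum2
  -- iterate the improvement step; finiteness of `S i` forces termination
  have main : ∀ n : ℕ, ∀ s, s ∈ R i →
      (Finset.univ.filter fun x => Φ s < Φ x).card ≤ n →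
      ∃ s', s' ∈ R i ∧ ¬ CondBDom ζ pref Sh Th R i s' := by
    intro n
    induction n with
    | zero =>
      intro s hs hcard
      by_cases hb : CondBDom ζ pref Sh Th R i s
      · obtain ⟨s', hs', hlt⟩ := step s hs hb
        have : s' ∈ Finset.univ.filter fun x => Φ s < Φ x := by
          simp [hlt]
        have := Finset.card_pos.mpr ⟨s', this⟩
        omega
      · exact ⟨s, hs, hb⟩
    | succ n ih =>
      intro s hs hcard
      by_cases hb : CondBDom ζ pref Sh Th R i s
      · obtain ⟨s', hs', hlt⟩ := step s hs hb
        have hss : (Finset.univ.filter fun x => Φ s' < Φ x) ⊂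
            (Finset.univ.filter fun x => Φ s < Φ x) := by
          refine Finset.ssubset_iff_of_subset ?_ |>.mpr ?_
          · intro x hx
            simp only [Finset.mem_filter, Finset.mem_univ, true_and] at hx ⊢
            exact hlt.trans hx
          · refine ⟨s', ?_, ?_⟩ <;>
              simp [hlt]
        have := Finset.card_lt_card hss
        exact ih s' hs' (by omega)
      · exact ⟨s, hs, hb⟩
  obtain ⟨s0, hs0⟩ := hR i
  obtain ⟨s', hs', hnb⟩ := main _ s0 hs0 le_rfl
  exact ⟨s', hs', hnb⟩

theorem ICBD_nonempty
    (hcomp : ∀ (i : I) (x y : Z), pref i x y ∨ pref i y x)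
    (htrans : ∀ i : I, Transitive (pref i))
    (hSh : ∀ (i : I) (h : H i), (Sh i h).Nonempty)
    (hTh : ∀ (i : I) (h : H i), (Th i h).Nonempty)
    (hrep : Replacement ζ Sh Th) :
    (∀ (k : ℕ) (i : I), (Uiter ζ pref Sh Th k i).Nonempty) ∧
    (∀ i : I, (⋂ n : ℕ, Uiter ζ pref Sh Th n i).Nonempty) ∧
    ∃ K : ℕ, Uiter ζ pref Sh Th K = Uiter ζ pref Sh Th (K + 1) ∧
      (∀ i : I, Uiter ζ pref Sh Th K i = ⋂ n : ℕ, Uiter ζ pref Sh Th n i) ∧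
      ∀ i : I, (Uiter ζ pref Sh Th K i).Nonempty := by
  classical
  have hsucc : ∀ k, Uiter ζ pref Sh Th (k + 1) =
      Uop ζ pref Sh Th (Uiter ζ pref Sh Th k) := fun _ => rfl
  have hrestr : ∀ k, IsRestriction (Uiter ζ pref Sh Th k) := by
    intro k
    induction k with
    | zero => intro j; exact ⟨Classical.ofNonempty, Set.mem_univ _⟩
    | succ k ih =>
      intro j
      rw [hsucc]
      exact Uop_nonempty ζ pref Sh Th hcomp htrans hrep _ ih j
  have hstep : ∀ k j, Uiter ζ pref Sh Th (k + 1) j ⊆ Uiter ζ pref Sh Th k j := by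
    intro k j s hsmem
    rw [hsucc] at hsmem
    exact hsmem.1
  have hanti : ∀ m n, m ≤ n → ∀ j,
      Uiter ζ pref Sh Th n j ⊆ Uiter ζ pref Sh Th m j := by
    intro m n hmn
    induction hmn with
    | refl => exact fun j => subset_rfl
    | @step n h ih => exact fun j s hs => ih j (hstep n j hs)
  set f : ℕ → ℕ :=
    fun n => ∑ j : I, (Set.toFinite (Uiter ζ pref Sh Th n j)).toFinset.card with hf
  have hfanti : ∀ n, f (n + 1) ≤ f n := by
    intro n
    refine Finset.sum_le_sum fun j _ => Finset.card_le_card ?_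
    rw [Set.Finite.toFinset_subset_toFinset]
    exact hstep n j
  have hexK : ∃ K, f (K + 1) = f K := by
    by_contra hno
    push_neg at hno
    have hlt : ∀ n, f (n + 1) < f n :=
      fun n => lt_of_le_of_ne (hfanti n) (hno n)
    have hbound : ∀ n, f n + n ≤ f 0 := by
      intro n
      induction n with
      | zero => simp
      | succ n ih => have := hlt n; omega
    have := hbound (f 0 + 1)
    omega
  obtain ⟨K, hK⟩ := hexK
  have hKeq : Uiter ζ pref Sh Th K = Uiter ζ pref Sh Th (K + 1) := by
    by_contra hne
    have hex : ∃ j, Uiter ζ pref Sh Th (K + 1) j ≠ Uiter ζ pref Sh Th K j := by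
      by_contra hall
      push_neg at hall
      exact hne (funext fun j => (hall j).symm)
    obtain ⟨j0, hj0⟩ := hex
    have hssub : (Set.toFinite (Uiter ζ pref Sh Th (K + 1) j0)).toFinset ⊂
        (Set.toFinite (Uiter ζ pref Sh Th K j0)).toFinset := by
      rw [Finset.ssubset_iff_subset_ne]
      constructor
      · rw [Set.Finite.toFinset_subset_toFinset]
        exact hstep K j0
      · intro hceq
        exact hj0 (Set.Finite.toFinset_inj.mp hceq)
    have hstrict : f (K + 1) < f K := by
      refine Finset.sum_lt_sum (fun j _ => Finset.card_le_card ?_)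
        ⟨j0, Finset.mem_univ _, Finset.card_lt_card hssub⟩
      rw [Set.Finite.toFinset_subset_toFinset]
      exact hstep K j
    omega
  have hstab : ∀ n, K ≤ n → Uiter ζ pref Sh Th n = Uiter ζ pref Sh Th K := by
    intro n hKn
    induction n, hKn using Nat.le_induction with
    | base => rfl
    | succ n hKn ih =>
      rw [hsucc n, ih, ← hsucc K]
      exact hKeq.symm
  have hInter : ∀ j, Uiter ζ pref Sh Th K j = ⋂ n, Uiter ζ pref Sh Th n j := by
    intro j
    apply Set.eq_of_subset_of_subset
    · apply Set.subset_iInter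
      intro n
      rcases le_or_gt n K with h | h
      · exact hanti n K h j
      · rw [hstab n h.le]
    · exact Set.iInter_subset _ K
  refine ⟨fun k i => hrestr k i, ?_, K, hKeq, hInter, fun i => hrestr K i⟩
  intro i
  rw [← hInter i]
  exact hrestr K i

end OrdinalGames

end ICBD
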